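/- Let k ≥ 1 and let A ∈ M_k(𝔽₂) be a symmetric matrix with A𝟏 = 0 and rank A = k-2, and let b ∈ 𝔽₂^k with 𝟏ᵀb = 0 and b ∉ Im A. Write Ker A = {0, 𝟏, d, d+𝟏}. Let D be a diagonal matrix with diagonal vector b (i.e., D𝟏 = b). Then the kernel of the 2k×2k block matrix M = [[A+D, D],[D, A+D]] equals {(u,u)ᵀ : u ∈ Ker A} and has exactly 4 elements. -/
import Mathlib


open Matrix

private lemma zmod2_cases : ∀ x : ZMod 2, x = 0 ∨ x = 1 := by decide

private lemma z3 : ∀ a b c : ZMod 2, a + b + c = 0 → a = b + c := by decide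

private lemma z3' : ∀ a b c : ZMod 2, b + (a + c) = 0 → a = b + c := by decide

private lemma ztwo : (2 : ZMod 2) = 0 := by decide

private lemma z2 : ∀ a b : ZMod 2, a + b = 0 → b = a := by decide

private lemma addself {k : ℕ} (z : Fin k → ZMod 2) : z + z = 0 := by
  funext i; exact CharTwo.add_self_eq_zero _

/-- for symmetric A over 𝔽₂ with A𝟏 = 0, rank k-2,
Ker A = {0, 𝟏, d, d+𝟏}, and b ∉ Im A with 𝟏ᵀb = 0, the kernel of the block
matrix [[A+D, D],[D, A+D]] (D = diag b) is {(u,u) : u ∈ Ker A}, of size 4. -/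
theorem stmt10 (k : ℕ) (hk : 1 ≤ k) (A : Matrix (Fin k) (Fin k) (ZMod 2))
    (hsymm : A.IsSymm) (hA1 : A *ᵥ (fun _ => 1) = 0) (hrank : A.rank = k - 2)
    (b : Fin k → ZMod 2) (hb1 : ∑ i, b i = 0) (hbim : ¬ ∃ x, A *ᵥ x = b)
    (d : Fin k → ZMod 2)
    (hker : ∀ x, A *ᵥ x = 0 ↔ x = 0 ∨ x = (fun _ => 1) ∨ x = d ∨ x = d + fun _ => 1) :
    (∀ v : Fin k ⊕ Fin k → ZMod 2,
      (Matrix.fromBlocks (A + Matrix.diagonal b) (Matrix.diagonal b)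
        (Matrix.diagonal b) (A + Matrix.diagonal b)) *ᵥ v = 0 ↔
      ∃ u, A *ᵥ u = 0 ∧ v = Sum.elim u u) ∧
    Set.ncard {v : Fin k ⊕ Fin k → ZMod 2 |
      (Matrix.fromBlocks (A + Matrix.diagonal b) (Matrix.diagonal b)
        (Matrix.diagonal b) (A + Matrix.diagonal b)) *ᵥ v = 0} = 4 := by
  classical
  set one : Fin k → ZMod 2 := (fun _ => 1) with hone
  -- k ≥ 2
  have hk2 : 2 ≤ k := by
    rcases Nat.lt_or_ge k 2 with h | h
    · -- k = 1 : contradiction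
      interval_cases k
      exfalso
      apply hbim
      refine ⟨0, ?_⟩
      have hb0 : b = 0 := by
        funext i
        have : i = 0 := Subsingleton.elim _ _
        subst this
        simpa using hb1
      rw [hb0, Matrix.mulVec_zero]
    · exact h
  have hone0 : one ≠ 0 := by
    intro h
    have := congrFun h ⟨0, hk⟩
    simp [hone] at this
  -- kernel of A as submodule
  set K := LinearMap.ker A.mulVecLin with hK
  have hKmem : ∀ x, x ∈ K ↔ (x = 0 ∨ x = one ∨ x = d ∨ x = d + one) := by
    intro x
    rw [LinearMap.mem_ker, Matrix.mulVecLin_apply]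
    exact hker x
  have hKset : (K : Set (Fin k → ZMod 2)) = {0, one, d, d + one} := by
    ext x
    simp only [SetLike.mem_coe, hKmem, Set.mem_insert_iff, Set.mem_singleton_iff]
  -- finrank of kernel is 2
  have hrn := LinearMap.finrank_range_add_finrank_ker A.mulVecLin
  rw [Module.finrank_fin_fun] at hrn
  have hrank' : Module.finrank (ZMod 2) (LinearMap.range A.mulVecLin) = k - 2 := hrank
  rw [hrank'] at hrn
  have hfr : Module.finrank (ZMod 2) K = 2 := by rw [hK]; omega
  -- card of kernel is 4
  haveI : Fintype K := Fintype.ofFinite _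
  have hcard : Nat.card K = 4 := by
    rw [Nat.card_eq_fintype_card, Module.card_eq_pow_finrank (K := ZMod 2), ZMod.card, hfr]
    norm_num
  have hncard : Set.ncard ({0, one, d, d + one} : Set (Fin k → ZMod 2)) = 4 := by
    rw [← hKset, ← Nat.card_coe_set_eq]
    exact hcard
  -- d is not 0 or 1
  have hd0 : d ≠ 0 := by
    intro h
    subst h
    have h1 : ({0, one, (0 : Fin k → ZMod 2), 0 + one} : Set (Fin k → ZMod 2)) = {0, one} := by
      have : (0 : Fin k → ZMod 2) + one = one := by rw [zero_add]
      rw [this]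
      ext x; simp only [Set.mem_insert_iff, Set.mem_singleton_iff]; tauto
    rw [h1] at hncard
    have hle : Set.ncard ({0, one} : Set (Fin k → ZMod 2)) ≤ 2 := by
      refine le_trans (Set.ncard_insert_le _ _) ?_
      simp [Set.ncard_singleton]
    omega
  have hd1 : d ≠ one := by
    intro h
    subst h
    have h1 : ({0, one, one, one + one} : Set (Fin k → ZMod 2)) = {0, one} := by
      rw [addself]
      ext x; simp only [Set.mem_insert_iff, Set.mem_singleton_iff]; tauto
    rw [h1] at hncard
    have hle : Set.ncard ({0, one} : Set (Fin k → ZMod 2)) ≤ 2 := by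
      refine le_trans (Set.ncard_insert_le _ _) ?_
      simp [Set.ncard_singleton]
    omega
  -- A annihilates d
  have hAd : A *ᵥ d = 0 := (hker d).mpr (Or.inr (Or.inr (Or.inl rfl)))
  -- orthogonality: image of A is orthogonal to kernel vectors
  have horth : ∀ (x c : Fin k → ZMod 2), A *ᵥ c = 0 → (A *ᵥ x) ⬝ᵥ c = 0 := by
    intro x c hc
    calc (A *ᵥ x) ⬝ᵥ c = c ⬝ᵥ (A *ᵥ x) := dotProduct_comm _ _
    _ = (c ᵥ* A) ⬝ᵥ x := Matrix.dotProduct_mulVec _ _ _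
    _ = (Aᵀ *ᵥ c) ⬝ᵥ x := by rw [Matrix.mulVec_transpose]
    _ = (A *ᵥ c) ⬝ᵥ x := by rw [hsymm]
    _ = 0 := by rw [hc, zero_dotProduct]
  -- the 2×k matrix whose kernel should coincide with range of A
  set B : Matrix (Fin 2) (Fin k) (ZMod 2) := Matrix.of ![one, d] with hB
  -- B is surjective
  obtain ⟨i, hi⟩ : ∃ i, d i = 1 := by
    by_contra h
    push_neg at h
    apply hd0
    funext j
    rcases zmod2_cases (d j) with h' | h'
    · simpa using h'
    · exact absurd h' (h j)
  obtain ⟨j, hj⟩ : ∃ j, d j = 0 := by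
    by_contra h
    push_neg at h
    apply hd1
    funext l
    rcases zmod2_cases (d l) with h' | h'
    · exact absurd h' (h l)
    · simpa [hone] using h'
  have hij : i ≠ j := by intro h; rw [h, hj] at hi; exact one_ne_zero hi.symm
  have hr1 : B *ᵥ (Pi.single j 1 : Fin k → ZMod 2) = ![1, 0] := by
    funext r
    rw [Matrix.mulVec_single]
    fin_cases r
    · show B 0 j * 1 = 1
      simp [hB, hone]
    · show B 1 j * 1 = 0
      simp [hB, hj]
  have hr2 : B *ᵥ ((Pi.single i 1 : Fin k → ZMod 2) + Pi.single j 1) = ![0, 1] := by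
    rw [Matrix.mulVec_add]
    funext r
    rw [Matrix.mulVec_single, Matrix.mulVec_single]
    fin_cases r
    · show B 0 i * 1 + B 0 j * 1 = 0
      simp only [hB, Matrix.of_apply, Matrix.cons_val_zero, hone, mul_one]
      decide
    · show B 1 i * 1 + B 1 j * 1 = 1
      have e1 : B 1 i = d i := rfl
      have e2 : B 1 j = d j := rfl
      rw [e1, e2, hi, hj, mul_one, mul_one, add_zero]
  have hBsurj : LinearMap.range B.mulVecLin = ⊤ := by
    rw [LinearMap.range_eq_top]
    intro t
    refine ⟨t 0 • (Pi.single j 1 : Fin k → ZMod 2) + t 1 • ((Pi.single i 1 : Fin k → ZMod 2) + Pi.single j 1), ?_⟩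
    rw [Matrix.mulVecLin_apply, Matrix.mulVec_add, Matrix.mulVec_smul, Matrix.mulVec_smul,
      hr1, hr2]
    funext r
    fin_cases r
    · show t 0 * 1 + t 1 * 0 = t 0
      ring
    · show t 0 * 0 + t 1 * 1 = t 1
      ring
  -- finrank of kernel of B
  have hrnB := LinearMap.finrank_range_add_finrank_ker B.mulVecLin
  rw [Module.finrank_fin_fun, hBsurj, finrank_top, Module.finrank_fin_fun] at hrnB
  have hfrB : Module.finrank (ZMod 2) (LinearMap.ker B.mulVecLin) = k - 2 := by omega
  -- range A ≤ ker B
  have hseq : LinearMap.range A.mulVecLin = LinearMap.ker B.mulVecLin := by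
    apply Submodule.eq_of_le_of_finrank_eq
    · rintro z ⟨x, rfl⟩
      rw [LinearMap.mem_ker]
      funext r
      simp only [Matrix.mulVecLin_apply, Pi.zero_apply]
      rw [Matrix.mulVec]
      fin_cases r
      · show (B 0) ⬝ᵥ (A *ᵥ x) = 0
        rw [dotProduct_comm]
        exact horth x one hA1
      · show (B 1) ⬝ᵥ (A *ᵥ x) = 0
        rw [dotProduct_comm]
        exact horth x d hAd
    · rw [hrank', hfrB]
  -- b ⬝ᵥ d = 1
  have hbd : b ⬝ᵥ d = 1 := by
    have hbnot : b ∉ LinearMap.ker B.mulVecLin := by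
      rw [← hseq]
      rintro ⟨x, hx⟩
      exact hbim ⟨x, hx⟩
    rw [LinearMap.mem_ker] at hbnot
    have hBb0 : (B.mulVecLin b) 0 = 0 := by
      simp only [Matrix.mulVecLin_apply]
      rw [Matrix.mulVec]
      show (B 0) ⬝ᵥ b = 0
      simp only [hB, Matrix.of_apply, Matrix.cons_val_zero]
      simpa [dotProduct, hone] using hb1
    have hBb1 : (B.mulVecLin b) 1 ≠ 0 := by
      intro h
      apply hbnot
      funext r
      fin_cases r
      · exact hBb0
      · exact h
    have : (B.mulVecLin b) 1 = d ⬝ᵥ b := by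
      simp only [Matrix.mulVecLin_apply]
      rw [Matrix.mulVec]
      show (B 1) ⬝ᵥ b = d ⬝ᵥ b
      rfl
    rw [this] at hBb1
    rw [dotProduct_comm]
    rcases zmod2_cases (d ⬝ᵥ b) with h | h
    · exact absurd h hBb1
    · exact h
  -- the main kernel characterization
  set D := Matrix.diagonal b with hD
  have hDone : D *ᵥ one = b := by
    funext l
    rw [hD, Matrix.mulVec_diagonal]
    simp [hone]
  have main : ∀ v : Fin k ⊕ Fin k → ZMod 2,
      (Matrix.fromBlocks (A + D) D D (A + D)) *ᵥ v = 0 ↔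
      ∃ u, A *ᵥ u = 0 ∧ v = Sum.elim u u := by
    intro v
    constructor
    · intro hv
      set x := v ∘ Sum.inl with hx
      set y := v ∘ Sum.inr with hy
      have hvd : v = Sum.elim x y := by
        funext s; cases s <;> rfl
      rw [hvd, Matrix.fromBlocks_mulVec] at hv
      have eq1 : (A + D) *ᵥ x + D *ᵥ y = 0 := by
        funext l; exact congrFun hv (Sum.inl l)
      have eq2 : D *ᵥ x + (A + D) *ᵥ y = 0 := by
        funext l; exact congrFun hv (Sum.inr l)
      have E1 : A *ᵥ x = D *ᵥ (x + y) := by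
        funext l
        have h := congrFun eq1 l
        simp only [Matrix.add_mulVec, Matrix.mulVec_add, Pi.add_apply, Pi.zero_apply] at h ⊢
        exact z3 _ _ _ h
      have E2 : A *ᵥ y = D *ᵥ (x + y) := by
        funext l
        have h := congrFun eq2 l
        simp only [Matrix.add_mulVec, Matrix.mulVec_add, Pi.add_apply, Pi.zero_apply] at h ⊢
        exact z3' _ _ _ h
      have hw : A *ᵥ (x + y) = 0 := by
        rw [Matrix.mulVec_add, E1, E2, addself]
      have hDd1 : (D *ᵥ d) ⬝ᵥ one = 1 := by
        have : (D *ᵥ d) ⬝ᵥ one = b ⬝ᵥ d := by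
          simp only [dotProduct, hD, Matrix.mulVec_diagonal, hone, mul_one]
        rw [this, hbd]
      rcases (hker (x + y)).mp hw with h | h | h | h
      · -- x + y = 0, so y = x
        have hyx : y = x := by
          funext l
          have := congrFun h l
          simp only [Pi.add_apply, Pi.zero_apply] at this
          exact z2 _ _ this
        refine ⟨x, ?_, by rw [hvd, hyx]⟩
        rw [E1, h, Matrix.mulVec_zero]
      · -- x + y = 1: b in the image, contradiction
        exfalso
        apply hbim
        exact ⟨x, by rw [E1, h, hDone]⟩
      · -- x + y = d
        exfalso
        have h0 := horth x one hA1
        rw [E1, h] at h0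
        rw [hDd1] at h0
        exact one_ne_zero h0
      · -- x + y = d + 1
        exfalso
        have h0 := horth x one hA1
        rw [E1, h] at h0
        rw [Matrix.mulVec_add, add_dotProduct, hDd1, hDone] at h0
        have : b ⬝ᵥ one = 0 := by simpa [dotProduct, hone] using hb1
        rw [this, add_zero] at h0
        exact one_ne_zero h0
    · rintro ⟨u, hu, rfl⟩
      rw [Matrix.fromBlocks_mulVec]
      funext s
      cases s with
      | inl l =>
        show ((A + D) *ᵥ u + D *ᵥ u) l = 0
        rw [Matrix.add_mulVec, add_assoc, addself, add_zero, hu]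
        rfl
      | inr l =>
        show (D *ᵥ u + (A + D) *ᵥ u) l = 0
        rw [Matrix.add_mulVec, hu, zero_add, addself]
        rfl
  refine ⟨main, ?_⟩
  -- cardinality
  have hSeq : {v : Fin k ⊕ Fin k → ZMod 2 |
      (Matrix.fromBlocks (A + D) D D (A + D)) *ᵥ v = 0} =
      (fun u : Fin k → ZMod 2 => Sum.elim u u) '' (K : Set (Fin k → ZMod 2)) := by
    ext v
    simp only [Set.mem_setOf_eq, Set.mem_image, SetLike.mem_coe, LinearMap.mem_ker,
      Matrix.mulVecLin_apply, main v]
    constructor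
    · rintro ⟨u, hu, rfl⟩; exact ⟨u, hu, rfl⟩
    · rintro ⟨u, hu, rfl⟩; exact ⟨u, hu, rfl⟩
  rw [hSeq]
  have hinj : Function.Injective (fun u : Fin k → ZMod 2 => Sum.elim u u) := by
    intro a c h
    funext l
    exact congrFun h (Sum.inl l)
  rw [Set.ncard_image_of_injective _ hinj]
  rw [hKset, hncard]
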